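/- arXiv:2309.05482 — 2 statements merged into one kernel-verified Lean document; each statement's English description precedes it below -/
import Mathlib

section
/- Let T : S_n × S_n → ℝ be a function of two permutation arguments (with fixed additional data) satisfying the transferability condition: T(π_1, π_2; ε_σ) = T(π_1 ∘ σ⁻¹, π_2 ∘ σ⁻¹; ε) for all permutations π_1, π_2, σ, where ε ∈ ℝ^n and ε_σ denotes the vector ε permuted by σ. Let π_0 be the identity and π_1, ..., π_B be independent uniformly random permutations, and suppose ε has exchangeable coordinates. Define T_{0b} = T(π_0, π_b; ε), T_{b0} = T(π_b, π_0; ε), ω_b = 1 if T_{b0} > T_{0b}, ω_b = 1/2 if T_{b0} = T_{0b}, ω_b = 0 otherwise, and p = (1 + Σ_{b=1}^B ω_b)/(B+1). Then for every α > 0, P(p ≤ α) < 2α. -/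
open MeasureTheory Finset
open scoped ENNReal

/-- Permutations form a finite set; we equip them with the discrete σ-algebra. -/
instance permMeasurableSpace (n : ℕ) : MeasurableSpace (Equiv.Perm (Fin n)) := ⊤

instance (n : ℕ) : DiscreteMeasurableSpace (Equiv.Perm (Fin n)) :=
  ⟨fun _ => MeasurableSpace.measurableSet_top⟩

lemma count_bound {N : ℕ} (α : ℝ) (ω : Fin N → Fin N → ℝ)
    (hnn : ∀ i j, 0 ≤ ω i j) (hsum : ∀ i j, ω i j + ω j i = 1) :
    (((univ : Finset (Fin N)).filter
        (fun i => 1 + ∑ j ∈ univ.erase i, ω i j ≤ (N : ℝ) * α)).card : ℝ)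
      ≤ max 0 (2 * N * α - 1) := by
  classical
  set M := (univ : Finset (Fin N)).filter
      (fun i => 1 + ∑ j ∈ univ.erase i, ω i j ≤ (N : ℝ) * α) with hM
  rcases Nat.eq_zero_or_pos M.card with h0 | hpos
  · simp [h0]
  · refine le_max_of_le_right ?_
    have hm1 : (1 : ℝ) ≤ (M.card : ℝ) := by exact_mod_cast hpos
    have hub : ∑ i ∈ M, (1 + ∑ j ∈ univ.erase i, ω i j) ≤ (M.card : ℝ) * ((N : ℝ) * α) := by
      have := Finset.sum_le_card_nsmul M (fun i => 1 + ∑ j ∈ univ.erase i, ω i j) ((N : ℝ) * α)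
        (fun i hi => (Finset.mem_filter.mp hi).2)
      simpa [nsmul_eq_mul] using this
    have hlb : ∀ i ∈ M, (1 + ∑ j ∈ M.erase i, ω i j) ≤ (1 + ∑ j ∈ univ.erase i, ω i j) := by
      intro i _
      have : ∑ j ∈ M.erase i, ω i j ≤ ∑ j ∈ univ.erase i, ω i j := by
        apply Finset.sum_le_sum_of_subset_of_nonneg
        · intro j hj
          rcases Finset.mem_erase.mp hj with ⟨hji, _⟩
          exact Finset.mem_erase.mpr ⟨hji, Finset.mem_univ j⟩
        · intro j _ _; exact hnn i j
      linarith
    have hswap : ∑ i ∈ M, ∑ j ∈ M.erase i, ω j i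
        = ∑ i ∈ M, ∑ j ∈ M.erase i, ω i j := by
      rw [Finset.sum_comm' (t' := M) (s' := fun j => M.erase j)
        (f := fun i j => ω j i)
        (by
          intro i j
          constructor
          · rintro ⟨hi, hj⟩
            exact ⟨Finset.mem_erase.mpr ⟨fun h => (Finset.mem_erase.mp hj).1 h.symm, hi⟩,
              (Finset.mem_erase.mp hj).2⟩
          · rintro ⟨hi, hj⟩
            exact ⟨(Finset.mem_erase.mp hi).2,
              Finset.mem_erase.mpr ⟨fun h => (Finset.mem_erase.mp hi).1 h.symm, hj⟩⟩)]
    have hdouble : 2 * ∑ i ∈ M, ∑ j ∈ M.erase i, ω i j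
        = (M.card : ℝ) * ((M.card : ℝ) - 1) := by
      have h2 : 2 * ∑ i ∈ M, ∑ j ∈ M.erase i, ω i j
          = ∑ i ∈ M, ∑ j ∈ M.erase i, (ω i j + ω j i) := by
        simp_rw [Finset.sum_add_distrib]
        rw [hswap]; ring
      rw [h2]
      have : ∀ i ∈ M, ∑ j ∈ M.erase i, (ω i j + ω j i) = ((M.card : ℝ) - 1) := by
        intro i hi
        rw [Finset.sum_congr rfl (fun j _ => hsum i j), Finset.sum_const]
        rw [Finset.card_erase_of_mem hi]
        rw [nsmul_eq_mul, mul_one, Nat.cast_sub hpos, Nat.cast_one]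
      rw [Finset.sum_congr rfl this, Finset.sum_const, nsmul_eq_mul]
    have hkey : (M.card : ℝ) + ∑ i ∈ M, ∑ j ∈ M.erase i, ω i j
        ≤ (M.card : ℝ) * ((N : ℝ) * α) := by
      have := Finset.sum_le_sum hlb
      calc (M.card : ℝ) + ∑ i ∈ M, ∑ j ∈ M.erase i, ω i j
          = ∑ i ∈ M, (1 + ∑ j ∈ M.erase i, ω i j) := by
            rw [Finset.sum_add_distrib, Finset.sum_const, nsmul_eq_mul, mul_one]
        _ ≤ ∑ i ∈ M, (1 + ∑ j ∈ univ.erase i, ω i j) := this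
        _ ≤ _ := hub
    nlinarith [hdouble, hkey, hm1]

noncomputable def pw (a b : ℝ) : ℝ := if a > b then 1 else if a = b then 1/2 else 0

lemma pw_nonneg (a b : ℝ) : 0 ≤ pw a b := by
  unfold pw; split_ifs <;> norm_num

lemma pw_symm (a b : ℝ) : pw a b + pw b a = 1 := by
  unfold pw
  rcases lt_trichotomy a b with h | h | h
  · rw [if_neg (lt_asymm h), if_neg h.ne, if_pos h]; norm_num
  · subst h; rw [if_neg (lt_irrefl a), if_pos rfl]; norm_num
  · rw [if_pos h, if_neg (lt_asymm h), if_neg (ne_of_lt h)]; norm_num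

def PiExt (n B : ℕ) (π : Fin B → Equiv.Perm (Fin n)) :
    Fin (B+1) → Equiv.Perm (Fin n) := Fin.cons 1 π

@[simp] lemma PiExt_zero (n B : ℕ) (π : Fin B → Equiv.Perm (Fin n)) :
    PiExt n B π 0 = 1 := rfl

@[simp] lemma PiExt_succ (n B : ℕ) (π : Fin B → Equiv.Perm (Fin n)) (b : Fin B) :
    PiExt n B π b.succ = π b := by
  simp [PiExt]

noncomputable def omg (n B : ℕ)
    (T : Equiv.Perm (Fin n) → Equiv.Perm (Fin n) → (Fin n → ℝ) → ℝ)
    (x : (Fin n → ℝ) × (Fin B → Equiv.Perm (Fin n))) (i j : Fin (B+1)) : ℝ :=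
  pw (T (PiExt n B x.2 j) (PiExt n B x.2 i) x.1) (T (PiExt n B x.2 i) (PiExt n B x.2 j) x.1)

noncomputable def Ev (n B : ℕ)
    (T : Equiv.Perm (Fin n) → Equiv.Perm (Fin n) → (Fin n → ℝ) → ℝ) (α : ℝ)
    (i : Fin (B+1)) : Set ((Fin n → ℝ) × (Fin B → Equiv.Perm (Fin n))) :=
  {x | 1 + ∑ j ∈ univ.erase i, omg n B T x i j ≤ ((B:ℝ)+1) * α}

noncomputable def Phi (n B : ℕ) (i : Fin B)
    (x : (Fin n → ℝ) × (Fin B → Equiv.Perm (Fin n))) :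
    (Fin n → ℝ) × (Fin B → Equiv.Perm (Fin n)) :=
  (x.1 ∘ ⇑((x.2 i)⁻¹), fun j => if j = i then (x.2 i)⁻¹ else x.2 j * (x.2 i)⁻¹)

lemma sum_erase_zero {m : ℕ} (f : Fin (m+1) → ℝ) :
    ∑ j ∈ (univ : Finset (Fin (m+1))).erase 0, f j = ∑ b : Fin m, f b.succ := by
  have h1 := Finset.add_sum_erase (univ : Finset (Fin (m+1))) f (Finset.mem_univ 0)
  have h2 := Fin.sum_univ_succ f
  linarith

lemma sum_erase_succ {m : ℕ} (f : Fin (m+1) → ℝ) (i : Fin m) :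
    ∑ j ∈ (univ : Finset (Fin (m+1))).erase i.succ, f j
      = f 0 + ∑ b ∈ (univ : Finset (Fin m)).erase i, f b.succ := by
  have h1 := Finset.add_sum_erase (univ : Finset (Fin (m+1))) f (Finset.mem_univ i.succ)
  have h2 := Fin.sum_univ_succ f
  have h3 := Finset.add_sum_erase (univ : Finset (Fin m)) (fun b => f b.succ)
    (Finset.mem_univ i)
  linarith

lemma Ev_preimage (n B : ℕ)
    (T : Equiv.Perm (Fin n) → Equiv.Perm (Fin n) → (Fin n → ℝ) → ℝ)
    (hT : ∀ (π₁ π₂ σ : Equiv.Perm (Fin n)) (ε : Fin n → ℝ),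
      T π₁ π₂ (ε ∘ ⇑σ) = T (π₁ * σ⁻¹) (π₂ * σ⁻¹) ε)
    (α : ℝ) (i : Fin B) :
    Ev n B T α i.succ = Phi n B i ⁻¹' (Ev n B T α 0) := by
  ext x
  obtain ⟨ε, π⟩ := x
  simp only [Ev, Phi, Set.mem_preimage, Set.mem_setOf_eq]
  have hTσ : ∀ a b : Equiv.Perm (Fin n),
      T a b (ε ∘ ⇑((π i)⁻¹)) = T (a * π i) (b * π i) ε := by
    intro a b
    rw [hT a b (π i)⁻¹ ε, inv_inv]
  have hterm : ∀ b : Fin B,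
      omg n B T (ε ∘ ⇑((π i)⁻¹), fun j => if j = i then (π i)⁻¹ else π j * (π i)⁻¹) 0 b.succ
        = if b = i then omg n B T (ε, π) i.succ 0 else omg n B T (ε, π) i.succ b.succ := by
    intro b
    by_cases hb : b = i
    · subst hb
      simp only [omg, PiExt_zero, PiExt_succ, hTσ, if_pos rfl]
      simp [inv_mul_cancel]
    · simp only [omg, PiExt_zero, PiExt_succ, hTσ, if_neg hb]
      simp [mul_assoc, inv_mul_cancel]
  have hsum0 : ∑ j ∈ Finset.univ.erase (0 : Fin (B+1)),
        omg n B T (ε ∘ ⇑((π i)⁻¹), fun j => if j = i then (π i)⁻¹ else π j * (π i)⁻¹) 0 j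
      = ∑ j ∈ Finset.univ.erase i.succ, omg n B T (ε, π) i.succ j := by
    rw [sum_erase_zero, sum_erase_succ (fun j => omg n B T (ε, π) i.succ j) i]
    rw [Finset.sum_congr rfl (fun b _ => hterm b)]
    rw [← Finset.add_sum_erase Finset.univ
      (fun b => if b = i then omg n B T (ε, π) i.succ 0 else omg n B T (ε, π) i.succ b.succ)
      (Finset.mem_univ i)]
    congr 1
    · simp
    · exact Finset.sum_congr rfl (fun b hb => if_neg (Finset.mem_erase.mp hb).1)
  rw [hsum0]

lemma measure_preimage_Phi (n B : ℕ) (ν : Measure (Fin n → ℝ)) [IsProbabilityMeasure ν]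
    (hν : ∀ σ : Equiv.Perm (Fin n), ν.map (fun ε => ε ∘ ⇑σ) = ν) (i : Fin B)
    (S : Set ((Fin n → ℝ) × (Fin B → Equiv.Perm (Fin n)))) (hS : MeasurableSet S) :
    (ν.prod (Measure.pi fun _ : Fin B => (PMF.uniformOfFintype (Equiv.Perm (Fin n))).toMeasure))
      (Phi n B i ⁻¹' S)
    = (ν.prod (Measure.pi fun _ : Fin B =>
        (PMF.uniformOfFintype (Equiv.Perm (Fin n))).toMeasure)) S := by
  classical
  set μB : Measure (Fin B → Equiv.Perm (Fin n)) :=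
    Measure.pi fun _ : Fin B => (PMF.uniformOfFintype (Equiv.Perm (Fin n))).toMeasure with hμB
  set c0 : ℝ≥0∞ := ((Fintype.card (Equiv.Perm (Fin n)) : ℝ≥0∞))⁻¹ ^ B with hc0
  have hcomp : ∀ σ : Equiv.Perm (Fin n), Measurable (fun ε : Fin n → ℝ => ε ∘ ⇑σ) := by
    intro σ
    exact measurable_pi_lambda _ (fun k => measurable_pi_apply _)
  have hν' : ∀ (σ : Equiv.Perm (Fin n)) (A : Set (Fin n → ℝ)), MeasurableSet A →
      ν ((fun ε => ε ∘ ⇑σ) ⁻¹' A) = ν A := by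
    intro σ A hA
    conv_rhs => rw [← hν σ]
    rw [Measure.map_apply (hcomp σ) hA]
  have hPhiMeas : Measurable (Phi n B i) := by
    apply Measurable.prod
    · apply measurable_pi_lambda
      intro k
      have hF : Measurable (fun y : (Fin n → ℝ) × Equiv.Perm (Fin n) => y.1 (y.2⁻¹ k)) :=
        measurable_from_prod_countable_left (fun g => by simpa using measurable_pi_apply (g⁻¹ k))
      exact hF.comp (measurable_fst.prodMk ((measurable_pi_apply i).comp measurable_snd))
    · exact (measurable_of_countable
        (fun π : Fin B → Equiv.Perm (Fin n) =>
          fun j => if j = i then (π i)⁻¹ else π j * (π i)⁻¹)).comp measurable_snd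
  have hμBsingle : ∀ π : Fin B → Equiv.Perm (Fin n), μB {π} = c0 := by
    intro π
    rw [hμB, ← Set.univ_pi_singleton, Measure.pi_pi]
    have h1 : ∀ b : Fin B, (PMF.uniformOfFintype (Equiv.Perm (Fin n))).toMeasure {π b}
        = ((Fintype.card (Equiv.Perm (Fin n)) : ℝ≥0∞))⁻¹ := by
      intro b
      rw [PMF.toMeasure_apply_singleton _ _ (measurableSet_singleton _),
        PMF.uniformOfFintype_apply]
    rw [Finset.prod_congr rfl (fun b _ => h1 b), Finset.prod_const, hc0]
    simp
  set φ : (Fin B → Equiv.Perm (Fin n)) → (Fin B → Equiv.Perm (Fin n)) :=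
    fun π => fun j => if j = i then (π i)⁻¹ else π j * (π i)⁻¹ with hφ
  have hinv : Function.Involutive φ := by
    intro π
    funext j
    by_cases hj : j = i
    · subst hj; simp [hφ]
    · simp [hφ, hj, mul_assoc]
  rw [Measure.prod_apply_symm (hPhiMeas hS), Measure.prod_apply_symm hS,
    lintegral_countable', lintegral_countable']
  have hterm : ∀ π : Fin B → Equiv.Perm (Fin n),
      ν ((fun ε => (ε, π)) ⁻¹' (Phi n B i ⁻¹' S)) * μB {π}
        = ν ((fun ε => (ε, φ π)) ⁻¹' S) * μB {π} := by
    intro π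
    congr 1
    have h1 : ((fun ε : Fin n → ℝ => (ε, π)) ⁻¹' (Phi n B i ⁻¹' S))
        = (fun ε : Fin n → ℝ => ε ∘ ⇑((π i)⁻¹)) ⁻¹' ((fun ε => (ε, φ π)) ⁻¹' S) := by
      rfl
    rw [h1]
    exact hν' _ _ (measurable_prodMk_right hS)
  rw [tsum_congr hterm]
  simp_rw [hμBsingle]
  exact (Function.Involutive.toPerm φ hinv).tsum_eq (fun π => ν ((fun ε => (ε, π)) ⁻¹' S) * c0)

lemma Ev_measurable (n B : ℕ)
    (T : Equiv.Perm (Fin n) → Equiv.Perm (Fin n) → (Fin n → ℝ) → ℝ)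
    (hTmeas : ∀ π₁ π₂, Measurable (T π₁ π₂)) (α : ℝ) (i : Fin (B+1)) :
    MeasurableSet (Ev n B T α i) := by
  have homg : ∀ j : Fin (B+1), Measurable (fun x : (Fin n → ℝ) × (Fin B → Equiv.Perm (Fin n)) =>
      omg n B T x i j) := by
    intro j
    have hg1 : Measurable (fun x : (Fin n → ℝ) × (Fin B → Equiv.Perm (Fin n)) =>
        T (PiExt n B x.2 j) (PiExt n B x.2 i) x.1) :=
      measurable_from_prod_countable_left (fun π => by simpa using hTmeas (PiExt n B π j) (PiExt n B π i))
    have hg2 : Measurable (fun x : (Fin n → ℝ) × (Fin B → Equiv.Perm (Fin n)) =>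
        T (PiExt n B x.2 i) (PiExt n B x.2 j) x.1) :=
      measurable_from_prod_countable_left (fun π => by simpa using hTmeas (PiExt n B π i) (PiExt n B π j))
    have heq : (fun x : (Fin n → ℝ) × (Fin B → Equiv.Perm (Fin n)) => omg n B T x i j)
        = fun x => if T (PiExt n B x.2 i) (PiExt n B x.2 j) x.1
              < T (PiExt n B x.2 j) (PiExt n B x.2 i) x.1 then (1:ℝ)
            else if T (PiExt n B x.2 j) (PiExt n B x.2 i) x.1
              = T (PiExt n B x.2 i) (PiExt n B x.2 j) x.1 then 1/2 else 0 := rfl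
    rw [heq]
    exact Measurable.ite (measurableSet_lt hg2 hg1) measurable_const
      (Measurable.ite (measurableSet_eq_fun hg1 hg2) measurable_const measurable_const)
  have hf : Measurable (fun x : (Fin n → ℝ) × (Fin B → Equiv.Perm (Fin n)) =>
      1 + ∑ j ∈ univ.erase i, omg n B T x i j) :=
    (Finset.measurable_sum _ (fun j _ => homg j)).const_add 1
  exact measurableSet_le hf measurable_const


/-- Main PALMRT guarantee: let T be a bivariate function of permutations (with noise parameter ε)
satisfying the transferability condition, let ε have exchangeable coordinates (law ν), and let
π_1,...,π_B be independent uniform permutations, independent of ε (product measure).  With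
π₀ = id, T_{0b} = T(π₀, π_b; ε), T_{b0} = T(π_b, π₀; ε), ω_b = 1{T_{b0} > T_{0b}} +
(1/2)1{T_{b0} = T_{0b}} and p = (1 + Σ_b ω_b)/(B+1), we have P(p ≤ α) < 2α for every α > 0. -/
theorem stmt5 (n B : ℕ) (α : ℝ) (hα : 0 < α)
    (T : Equiv.Perm (Fin n) → Equiv.Perm (Fin n) → (Fin n → ℝ) → ℝ)
    (hTmeas : ∀ π₁ π₂, Measurable (T π₁ π₂))
    (hT : ∀ (π₁ π₂ σ : Equiv.Perm (Fin n)) (ε : Fin n → ℝ),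
      T π₁ π₂ (ε ∘ ⇑σ) = T (π₁ * σ⁻¹) (π₂ * σ⁻¹) ε)
    (ν : Measure (Fin n → ℝ)) [IsProbabilityMeasure ν]
    (hν : ∀ σ : Equiv.Perm (Fin n), ν.map (fun ε => ε ∘ ⇑σ) = ν) :
    (ν.prod (Measure.pi fun _ : Fin B =>
        (PMF.uniformOfFintype (Equiv.Perm (Fin n))).toMeasure))
      {x | (1 + ∑ b, (if T (x.2 b) 1 x.1 > T 1 (x.2 b) x.1 then (1 : ℝ)
              else if T (x.2 b) 1 x.1 = T 1 (x.2 b) x.1 then 1 / 2 else 0)) / (B + 1) ≤ α}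
      < ENNReal.ofReal (2 * α) := by
  classical
  set P := ν.prod (Measure.pi fun _ : Fin B =>
      (PMF.uniformOfFintype (Equiv.Perm (Fin n))).toMeasure) with hP
  have hPprob : IsProbabilityMeasure P := by rw [hP]; infer_instance
  have hEm : ∀ i : Fin (B+1), MeasurableSet (Ev n B T α i) := Ev_measurable n B T hTmeas α
  -- goal set is Ev 0
  have hgoal : {x : (Fin n → ℝ) × (Fin B → Equiv.Perm (Fin n)) |
      (1 + ∑ b, (if T (x.2 b) 1 x.1 > T 1 (x.2 b) x.1 then (1 : ℝ)
        else if T (x.2 b) 1 x.1 = T 1 (x.2 b) x.1 then 1 / 2 else 0)) / (B + 1) ≤ α}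
      = Ev n B T α 0 := by
    ext x
    simp only [Set.mem_setOf_eq, Ev]
    rw [div_le_iff₀ (by positivity), mul_comm α]
    have hsum : ∑ j ∈ univ.erase (0 : Fin (B+1)), omg n B T x 0 j
        = ∑ b, (if T (x.2 b) 1 x.1 > T 1 (x.2 b) x.1 then (1 : ℝ)
          else if T (x.2 b) 1 x.1 = T 1 (x.2 b) x.1 then 1 / 2 else 0) := by
      rw [sum_erase_zero]
      exact Finset.sum_congr rfl (fun b _ => by simp [omg, pw])
    rw [hsum]
  rw [hgoal]
  -- all events have the same probability
  have hsame : ∀ i : Fin B, P (Ev n B T α i.succ) = P (Ev n B T α 0) := by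
    intro i
    rw [Ev_preimage n B T hT α i, hP]
    exact measure_preimage_Phi n B ν hν i _ (hEm 0)
  -- sum over all B+1 events
  have hsum_eq : ∑ i : Fin (B+1), P (Ev n B T α i) = ((B : ℝ≥0∞) + 1) * P (Ev n B T α 0) := by
    rw [Fin.sum_univ_succ]
    rw [Finset.sum_congr rfl (fun i _ => hsame i), Finset.sum_const]
    simp [add_mul, mul_comm, nsmul_eq_mul, card_univ]
    ring
  -- pointwise bound on indicator sums
  have hpoint : ∀ x, ∑ i : Fin (B+1), (Ev n B T α i).indicator (fun _ => (1:ℝ≥0∞)) x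
      ≤ ENNReal.ofReal (max 0 (2 * ((B:ℝ)+1) * α - 1)) := by
    intro x
    have hcb := count_bound (N := B+1) α (fun i j => omg n B T x i j)
      (fun i j => pw_nonneg _ _) (fun i j => pw_symm _ _)
    have hcast : ((B+1 : ℕ) : ℝ) = (B:ℝ) + 1 := by push_cast; ring
    rw [hcast] at hcb
    have hfe : (univ : Finset (Fin (B+1))).filter
          (fun i => 1 + ∑ j ∈ univ.erase i, omg n B T x i j ≤ ((B:ℝ)+1) * α)
        = (univ : Finset (Fin (B+1))).filter (fun i => x ∈ Ev n B T α i) := by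
      apply Finset.filter_congr
      intro i _
      exact Iff.rfl
    rw [hfe] at hcb
    have hind : ∑ i : Fin (B+1), (Ev n B T α i).indicator (fun _ => (1:ℝ≥0∞)) x
        = (((univ : Finset (Fin (B+1))).filter (fun i => x ∈ Ev n B T α i)).card : ℝ≥0∞) := by
      rw [← Finset.sum_boole]
      exact Finset.sum_congr rfl (fun i _ => by simp [Set.indicator_apply])
    rw [hind]
    calc (((univ.filter (fun i => x ∈ Ev n B T α i)).card : ℕ) : ℝ≥0∞)
        = ENNReal.ofReal (((univ.filter (fun i => x ∈ Ev n B T α i)).card : ℕ) : ℝ) := by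
          rw [ENNReal.ofReal_natCast]
      _ ≤ _ := ENNReal.ofReal_le_ofReal hcb
  -- integrate
  have hintsum : ∑ i : Fin (B+1), P (Ev n B T α i)
      ≤ ENNReal.ofReal (max 0 (2 * ((B:ℝ)+1) * α - 1)) := by
    have h1 : ∀ i : Fin (B+1), P (Ev n B T α i)
        = ∫⁻ x, (Ev n B T α i).indicator (fun _ => (1:ℝ≥0∞)) x ∂P :=
      fun i => (lintegral_indicator_one (hEm i)).symm
    rw [Finset.sum_congr rfl (fun i _ => h1 i),
      ← lintegral_finset_sum _ (fun i _ => (measurable_const (a := (1:ℝ≥0∞))).indicator (hEm i))]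
    calc ∫⁻ x, ∑ i : Fin (B+1), (Ev n B T α i).indicator (fun _ => (1:ℝ≥0∞)) x ∂P
        ≤ ∫⁻ _, ENNReal.ofReal (max 0 (2 * ((B:ℝ)+1) * α - 1)) ∂P := lintegral_mono hpoint
      _ = ENNReal.ofReal (max 0 (2 * ((B:ℝ)+1) * α - 1)) := by
          rw [lintegral_const, measure_univ, mul_one]
  rw [hsum_eq] at hintsum
  -- conclude
  rcases le_or_gt (2 * ((B:ℝ)+1) * α - 1) 0 with hc | hc
  · have hmax : max 0 (2 * ((B:ℝ)+1) * α - 1) = 0 := max_eq_left hc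
    rw [hmax, ENNReal.ofReal_zero, nonpos_iff_eq_zero, mul_eq_zero] at hintsum
    have hP0 : P (Ev n B T α 0) = 0 := by
      rcases hintsum with h | h
      · exact absurd h (by simp)
      · exact h
    rw [hP0]
    exact ENNReal.ofReal_pos.mpr (by linarith)
  · have hmax : max 0 (2 * ((B:ℝ)+1) * α - 1) = 2 * ((B:ℝ)+1) * α - 1 := max_eq_right hc.le
    rw [hmax] at hintsum
    have h2 : ENNReal.ofReal (2 * ((B:ℝ)+1) * α - 1)
        < ENNReal.ofReal (((B:ℝ)+1) * (2 * α)) := by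
      rw [ENNReal.ofReal_lt_ofReal_iff (by positivity)]
      linarith
    have h3 : ENNReal.ofReal (((B:ℝ)+1) * (2 * α)) = ((B:ℝ≥0∞)+1) * ENNReal.ofReal (2 * α) := by
      rw [ENNReal.ofReal_mul (by positivity)]
      congr 1
      rw [ENNReal.ofReal_add (Nat.cast_nonneg B) zero_le_one, ENNReal.ofReal_natCast,
        ENNReal.ofReal_one]
    have h4 : ((B:ℝ≥0∞)+1) * P (Ev n B T α 0) < ((B:ℝ≥0∞)+1) * ENNReal.ofReal (2 * α) := by
      calc ((B:ℝ≥0∞)+1) * P (Ev n B T α 0) ≤ _ := hintsum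
        _ < _ := h3 ▸ h2
    exact (ENNReal.mul_lt_mul_iff_right (by simp) (by simp)).mp h4
end

section
/- Let n = B + 1 and let W be an n×n matrix with W_{ll} = 1 and W_{lk} + W_{kl} = 1, W_{lk} ≥ 0 for l ≠ k. Suppose the row sums W_{0·}, ..., W_{B·} are exchangeable random variables (under some probability measure on matrices of this form). Then the random variable p = W_{0·}/(B+1) satisfies P(p ≤ α) < 2α for all α > 0, and this bound cannot in general be improved to α: there exist such matrices where nearly 2α(B+1) rows have row sums at most α(B+1). -/
open MeasureTheory Finset
open scoped ENNReal NNReal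

private theorem cardlem19 (n m : ℕ) (h : m ≤ n) :
    (univ.filter (fun l : Fin n => (l : ℕ) < m)).card = m := by
  have : (univ.filter (fun l : Fin n => (l : ℕ) < m)) = univ.map (Fin.castLEEmb h) := by
    ext l
    simp only [mem_filter, mem_univ, true_and, mem_map, Fin.castLEEmb_apply]
    constructor
    · intro hl; exact ⟨⟨l, hl⟩, rfl⟩
    · rintro ⟨i, rfl⟩; exact i.2
  rw [this, card_map, card_univ, Fintype.card_fin]

private theorem countlem19 {n : ℕ} (M : Matrix (Fin (n+1)) (Fin (n+1)) ℝ)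
    (hd : ∀ l, M l l = 1) (hs : ∀ l k, l ≠ k → M l k + M k l = 1)
    (hp : ∀ l k, 0 ≤ M l k) (t : ℝ) :
    ((univ.filter (fun l => ∑ k, M l k ≤ t)).card : ℝ) ≤ max 0 (2*t - 1) := by
  set S := univ.filter (fun l : Fin (n+1) => ∑ k, M l k ≤ t) with hS
  set s : ℕ := S.card with hs'
  rcases Nat.eq_zero_or_pos s with h0 | h1
  · rw [h0]; simp
  have hdouble : 2 * ∑ l ∈ S, ∑ k ∈ S, M l k = (s:ℝ)^2 + s := by
    have : 2 * ∑ l ∈ S, ∑ k ∈ S, M l k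
        = ∑ l ∈ S, ∑ k ∈ S, (M l k + M k l) := by
      simp only [Finset.sum_add_distrib]
      rw [Finset.sum_comm (s := S) (t := S) (f := fun l k => M k l)]
      ring
    rw [this]
    have : ∀ l ∈ S, ∀ k ∈ S, M l k + M k l = 1 + (if l = k then 1 else 0) := by
      intro l _ k _
      by_cases hlk : l = k
      · subst hlk; simp [hd l]
      · simp [hlk, hs l k hlk]
    rw [Finset.sum_congr rfl (fun l hl => Finset.sum_congr rfl (fun k hk => this l hl k hk))]
    simp [Finset.sum_add_distrib, Finset.sum_ite_eq, Finset.mul_sum]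
    ring
  have hrow : ∑ l ∈ S, ∑ k, M l k ≤ s * t := by
    have : ∀ l ∈ S, ∑ k, M l k ≤ t := by
      intro l hl; exact (Finset.mem_filter.mp hl).2
    calc ∑ l ∈ S, ∑ k, M l k ≤ ∑ l ∈ S, t := Finset.sum_le_sum this
    _ = s * t := by rw [Finset.sum_const]; simp [hs']
  have hlow : ∑ l ∈ S, ∑ k ∈ S, M l k ≤ ∑ l ∈ S, ∑ k, M l k := by
    apply Finset.sum_le_sum
    intro l _
    exact Finset.sum_le_sum_of_subset_of_nonneg (Finset.subset_univ S)
      (fun k _ _ => hp l k)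
  have hkey : (s:ℝ)^2 + s ≤ 2 * (s * t) := by
    rw [← hdouble]; linarith
  have hs1 : (1:ℝ) ≤ s := by exact_mod_cast h1
  have : (s:ℝ) ≤ 2*t - 1 := by nlinarith
  exact le_max_of_le_right this

/-- For a random (B+1)×(B+1) comparison matrix W (diagonal 1, W_{lk} + W_{kl} = 1 off-diagonal,
nonnegative entries) with exchangeable row sums, the p-value p = W_{0·}/(B+1) satisfies
P(p ≤ α) < 2α for all α > 0; and this bound cannot in general be improved to α: for any
0 < α ≤ 1/2 there exists such a (deterministic) matrix where nearly 2α(B+1) rows (at least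
2α(B+1) − 2 of them) have row sums at most α(B+1). -/
theorem stmt19 (B : ℕ) {Ω : Type*} [MeasurableSpace Ω] (μ : Measure Ω)
    [IsProbabilityMeasure μ]
    (W : Ω → Matrix (Fin (B + 1)) (Fin (B + 1)) ℝ)
    (hdiag : ∀ ω l, W ω l l = 1)
    (hskew : ∀ ω l k, l ≠ k → W ω l k + W ω k l = 1)
    (hpos : ∀ ω l k, 0 ≤ W ω l k)
    (hmeas : ∀ l k, Measurable (fun ω => W ω l k))
    (hexch : ∀ ζ : Equiv.Perm (Fin (B + 1)),
      μ.map (fun ω => fun l => ∑ k, W ω (ζ l) k) = μ.map (fun ω => fun l => ∑ k, W ω l k)) :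
    (∀ α : ℝ, 0 < α →
      μ {ω | (∑ k, W ω 0 k) / (B + 1) ≤ α} < ENNReal.ofReal (2 * α)) ∧
    (∀ α : ℝ, 0 < α → α ≤ 1 / 2 →
      ∃ W₀ : Matrix (Fin (B + 1)) (Fin (B + 1)) ℝ,
        (∀ l, W₀ l l = 1) ∧ (∀ l k, l ≠ k → W₀ l k + W₀ k l = 1) ∧ (∀ l k, 0 ≤ W₀ l k) ∧
        2 * α * (B + 1) - 2 ≤
          ((Finset.univ.filter (fun l => ∑ k, W₀ l k ≤ α * (B + 1))).card : ℝ)) := by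
  constructor
  · -- Part 1
    intro α hα
    set t : ℝ := α * (B + 1) with ht
    have hB1 : (0:ℝ) < (B:ℝ) + 1 := by positivity
    have ht0 : 0 < t := by positivity
    set f : Ω → Fin (B+1) → ℝ := fun ω l => ∑ k, W ω l k with hf
    have hmf : ∀ l, Measurable (fun ω => f ω l) := by
      intro l
      exact Finset.measurable_sum _ (fun k _ => hmeas l k)
    have hmF : Measurable f := measurable_pi_lambda _ hmf
    set A : Fin (B+1) → Set Ω := fun l => {ω | f ω l ≤ t} with hA
    have hAm : ∀ l, MeasurableSet (A l) := fun l => (hmf l) measurableSet_Iic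
    -- the target set equals A 0
    have hset : {ω | (∑ k, W ω 0 k) / (B + 1) ≤ α} = A 0 := by
      ext ω
      simp only [hA, Set.mem_setOf_eq, hf]
      rw [div_le_iff₀ hB1]
    -- exchangeability: all μ (A l) equal
    have hAeq : ∀ l, μ (A l) = μ (A 0) := by
      intro l
      have hζ := hexch (Equiv.swap 0 l)
      have hCm : MeasurableSet {g : Fin (B+1) → ℝ | g 0 ≤ t} :=
        (measurable_pi_apply 0) measurableSet_Iic
      have hmg : Measurable (fun ω => fun l' => f ω ((Equiv.swap 0 l) l')) :=
        measurable_pi_lambda _ (fun l' => hmf _)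
      have h1 := congrArg (fun ν => ν {g : Fin (B+1) → ℝ | g 0 ≤ t}) hζ
      rw [Measure.map_apply hmg hCm, Measure.map_apply hmF hCm] at h1
      have : (fun ω => fun l' => f ω ((Equiv.swap 0 l) l')) ⁻¹' {g | g 0 ≤ t} = A l := by
        ext ω; simp [hA, Equiv.swap_apply_left]
      rw [this] at h1
      have : f ⁻¹' {g | g 0 ≤ t} = A 0 := by ext ω; simp [hA]
      rw [this] at h1
      exact h1
    -- sum of measures = integral of indicator sums
    have hsum : ∑ l : Fin (B+1), μ (A l)
        = ∫⁻ ω, ∑ l : Fin (B+1), (A l).indicator (fun _ => (1:ℝ≥0∞)) ω ∂μ := by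
      rw [lintegral_finset_sum]
      · refine Finset.sum_congr rfl (fun l _ => ?_)
        exact (lintegral_indicator_one (hAm l)).symm
      · exact fun l _ => measurable_const.indicator (hAm l)
    -- pointwise bound
    set c : ℝ := max 0 (2*t - 1) with hc
    have hpt : ∀ ω, ∑ l : Fin (B+1), (A l).indicator (fun _ => (1:ℝ≥0∞)) ω
        ≤ ENNReal.ofReal c := by
      intro ω
      have hcard := countlem19 (W ω) (hdiag ω) (hskew ω) (hpos ω) t
      have heq : ∑ l : Fin (B+1), (A l).indicator (fun _ => (1:ℝ≥0∞)) ω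
          = ((univ.filter (fun l => ∑ k, W ω l k ≤ t)).card : ℝ≥0∞) := by
        rw [Finset.card_filter]
        push_cast
        refine Finset.sum_congr rfl (fun l _ => ?_)
        by_cases hl : f ω l ≤ t
        · have hl' : ∑ k, W ω l k ≤ t := hl
          simp [Set.indicator_apply, hA, hl, hf, hl']
        · have hl' : ¬ ∑ k, W ω l k ≤ t := hl
          simp [Set.indicator_apply, hA, hl, hf, hl']
      rw [heq]
      calc ((univ.filter (fun l => ∑ k, W ω l k ≤ t)).card : ℝ≥0∞)
          = ENNReal.ofReal ((univ.filter (fun l => ∑ k, W ω l k ≤ t)).card : ℝ) := by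
            rw [ENNReal.ofReal_natCast]
        _ ≤ ENNReal.ofReal c := ENNReal.ofReal_le_ofReal hcard
    have hint : ∫⁻ ω, ∑ l : Fin (B+1), (A l).indicator (fun _ => (1:ℝ≥0∞)) ω ∂μ
        ≤ ENNReal.ofReal c := by
      calc ∫⁻ ω, ∑ l : Fin (B+1), (A l).indicator (fun _ => (1:ℝ≥0∞)) ω ∂μ
          ≤ ∫⁻ _, ENNReal.ofReal c ∂μ := lintegral_mono hpt
        _ = ENNReal.ofReal c := by simp
    -- combine
    have hmain : ((B:ℝ≥0∞)+1) * μ (A 0) ≤ ENNReal.ofReal c := by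
      have h1 : ∑ l : Fin (B+1), μ (A l) = ((B:ℝ≥0∞)+1) * μ (A 0) := by
        rw [Finset.sum_congr rfl (fun l _ => hAeq l), Finset.sum_const]
        simp [Finset.card_univ, nsmul_eq_mul]
      rw [← h1, hsum]
      exact hint
    have hclt : c < 2 * α * ((B:ℝ)+1) := by
      have h2t : (0:ℝ) < 2 * α * ((B:ℝ)+1) := by positivity
      apply max_lt h2t
      have : 2 * t = 2 * α * ((B:ℝ)+1) := by rw [ht]; ring
      linarith
    have hlt : ((B:ℝ≥0∞)+1) * μ (A 0) < ((B:ℝ≥0∞)+1) * ENNReal.ofReal (2*α) := by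
      calc ((B:ℝ≥0∞)+1) * μ (A 0) ≤ ENNReal.ofReal c := hmain
        _ < ENNReal.ofReal (2 * α * ((B:ℝ)+1)) := by
            exact (ENNReal.ofReal_lt_ofReal_iff (by positivity)).mpr hclt
        _ = ((B:ℝ≥0∞)+1) * ENNReal.ofReal (2*α) := by
            rw [show 2 * α * ((B:ℝ)+1) = ((B:ℝ)+1) * (2*α) by ring,
              ENNReal.ofReal_mul (by positivity)]
            congr 1
            rw [show ((B:ℝ)+1) = ((B+1:ℕ):ℝ) by push_cast; ring, ENNReal.ofReal_natCast]
            push_cast; ring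
    have hB1' : ((B:ℝ≥0∞)+1) ≠ 0 := by simp
    have hB2' : ((B:ℝ≥0∞)+1) ≠ ⊤ := by simp
    have := (ENNReal.mul_lt_mul_iff_right hB1' hB2').mp hlt
    rwa [hset]
  · -- Part 2
    intro α hα hα2
    have hB1 : (0:ℝ) < (B:ℝ) + 1 := by positivity
    set x : ℝ := 2 * α * ((B:ℝ)+1) - 1 with hx
    set m : ℕ := ⌊x⌋₊ with hm
    have hmB : m ≤ B + 1 := by
      rcases le_or_gt 0 x with hx0 | hx0
      · have h1 : (m:ℝ) ≤ x := Nat.floor_le hx0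
        have h2 : x ≤ (B:ℝ) := by
          rw [hx]; nlinarith
        have : (m:ℝ) ≤ ((B+1:ℕ):ℝ) := by push_cast; linarith
        exact_mod_cast this
      · rw [hm, Nat.floor_eq_zero.mpr]
        · exact Nat.zero_le _
        · linarith
    refine ⟨fun l k => if l = k then 1 else
        if (l:ℕ) < m then (if (k:ℕ) < m then 1/2 else 0)
        else (if (k:ℕ) < m then 1 else 1/2), ?_, ?_, ?_, ?_⟩
    · intro l; simp
    · intro l k hlk
      simp only [if_neg hlk, if_neg (Ne.symm hlk)]
      by_cases hl : (l:ℕ) < m <;> by_cases hk : (k:ℕ) < m <;> simp [hl, hk] <;> norm_num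
    · intro l k
      by_cases hlk : l = k
      · simp [hlk]
      · by_cases hl : (l:ℕ) < m <;> by_cases hk : (k:ℕ) < m <;>
          simp [hlk, hl, hk]
    · -- cardinality bound
      rcases lt_or_ge x 0 with hx0 | hx0
      · refine le_trans (le_of_lt ?_) (Nat.cast_nonneg _)
        rw [hx] at hx0; linarith
      · -- each l with l < m has row sum (m+1)/2 ≤ α(B+1)
        have hmx : (m:ℝ) ≤ x := Nat.floor_le hx0
        have hrowsum : ∀ l : Fin (B+1), (l:ℕ) < m →
            (∑ k : Fin (B+1), (if l = k then (1:ℝ) else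
              if (l:ℕ) < m then (if (k:ℕ) < m then 1/2 else 0)
              else (if (k:ℕ) < m then 1 else 1/2))) = (m:ℝ)/2 + 1/2 := by
          intro l hl
          have hterm : ∀ k : Fin (B+1), (if l = k then (1:ℝ) else
              if (l:ℕ) < m then (if (k:ℕ) < m then 1/2 else 0)
              else (if (k:ℕ) < m then 1 else 1/2))
              = (if (k:ℕ) < m then (1/2:ℝ) else 0) + (if k = l then 1/2 else 0) := by
            intro k
            by_cases hlk : l = k
            · subst hlk; simp [hl]; norm_num
            · by_cases hk : (k:ℕ) < m <;> simp [hlk, Ne.symm hlk, hl, hk]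
          rw [Finset.sum_congr rfl (fun k _ => hterm k), Finset.sum_add_distrib]
          have h1 : ∑ k : Fin (B+1), (if (k:ℕ) < m then (1/2:ℝ) else 0)
              = (m:ℝ) * (1/2) := by
            rw [← Finset.sum_filter, Finset.sum_const, cardlem19 (B+1) m hmB,
              nsmul_eq_mul]
          have h2 : ∑ k : Fin (B+1), (if k = l then (1/2:ℝ) else 0) = 1/2 := by
            simp [Finset.sum_ite_eq']
          rw [h1, h2]; ring
        have hsub : (univ.filter (fun l : Fin (B+1) => (l:ℕ) < m))
            ⊆ univ.filter (fun l : Fin (B+1) => (∑ k : Fin (B+1), (if l = k then (1:ℝ) else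
              if (l:ℕ) < m then (if (k:ℕ) < m then 1/2 else 0)
              else (if (k:ℕ) < m then 1 else 1/2))) ≤ α * ((B:ℝ)+1)) := by
          intro l hl
          rw [Finset.mem_filter] at hl ⊢
          refine ⟨hl.1, ?_⟩
          rw [hrowsum l hl.2]
          rw [hx] at hmx
          linarith
        have hcard := Finset.card_le_card hsub
        rw [cardlem19 (B+1) m hmB] at hcard
        have hfloor : x - 1 < (m:ℝ) := Nat.sub_one_lt_floor x
        have : 2 * α * ((B:ℝ)+1) - 2 < (m:ℝ) := by rw [hx] at hfloor; linarith
        have hcr : (m:ℝ) ≤ ((univ.filter (fun l : Fin (B+1) =>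
            (∑ k : Fin (B+1), (if l = k then (1:ℝ) else
              if (l:ℕ) < m then (if (k:ℕ) < m then 1/2 else 0)
              else (if (k:ℕ) < m then 1 else 1/2))) ≤ α * ((B:ℝ)+1))).card : ℝ) := by
          exact_mod_cast hcard
        linarith
end
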